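/- Let a(j) = log₂ j if j = i + 2^{2^k} for some k ∈ ℕ and integer i with -k ≤ i ≤ k, and a(j) = 1 otherwise, and let b(j) = 2^{-j-1} Σ_{i=1}^{j} 2^i a(i). Then for all j ∈ ℕ: b(j) ≤ log₂ j whenever -k + 2^{2^k} ≤ j ≤ 2^{2^k} + 2k for some k ∈ ℕ, and b(j) ≤ 2 otherwise. -/

import Mathlib

open Real
open scoped Classical

noncomputable section

def sparse (j : ℤ) : Prop :=
  ∃ k : ℕ, 1 ≤ k ∧ ∃ i : ℤ, -(k:ℤ) ≤ i ∧ i ≤ (k:ℤ) ∧ j = i + 2 ^ (2 ^ k)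

/-- The sparse logarithmic weight `a(j)`. -/
noncomputable def aSeq (j : ℤ) : ℝ := if sparse j then Real.logb 2 (j:ℝ) else 1

/-- `b(j) = 2^{-j-1} Σ_{i=1}^{j} 2^i a(i)`. -/
noncomputable def bSeq (j : ℕ) : ℝ :=
  (2:ℝ) ^ (-(j:ℤ) - 1) * ∑ i ∈ Finset.Icc 1 j, (2:ℝ) ^ (i:ℕ) * aSeq (i:ℤ)

/-- `j` lies in one of the blocks `[-k + 2^(2^k), 2^(2^k) + 2k]`, `k ∈ ℕ`. -/
def inBlock (j : ℕ) : Prop :=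
  ∃ k : ℕ, 1 ≤ k ∧ -(k:ℤ) + 2 ^ (2 ^ k) ≤ (j:ℤ) ∧ (j:ℤ) ≤ 2 ^ (2 ^ k) + 2 * k

namespace Stmt4Aux

/-- Natural-number version of "j is in the sparse part of block k". -/
def spN (j k : ℕ) : Prop := 1 ≤ k ∧ 2^(2^k) ≤ j + k ∧ j ≤ 2^(2^k) + k

/-- Natural-number version of "j is in the tail of block k". -/
def tlN (j k : ℕ) : Prop := 1 ≤ k ∧ 2^(2^k) + k < j ∧ j ≤ 2^(2^k) + 2*k

/-- Natural-number version of "j is in block k". -/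
def blkN (j k : ℕ) : Prop := 1 ≤ k ∧ 2^(2^k) ≤ j + k ∧ j ≤ 2^(2^k) + 2*k

lemma aux1 (k : ℕ) (hk : 1 ≤ k) : 2*k + 2 ≤ 2^(2^k) := by
  have h1 : k + 1 ≤ 2^k := Nat.lt_two_pow_self (n := k)
  have h2 : 2^(k+1) ≤ 2^(2^k) := Nat.pow_le_pow_right (by norm_num) h1
  have h3 : 2*(k+1) ≤ 2^(k+1) := by
    have : k + 1 ≤ 2^k := h1
    calc 2*(k+1) ≤ 2*2^k := by omega
    _ = 2^(k+1) := by ring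
  omega

lemma sparse_iff (j : ℕ) : sparse (j:ℤ) ↔ ∃ k, spN j k := by
  constructor
  · rintro ⟨k, hk, i, hi1, hi2, hij⟩
    have hc : ((2^(2^k) : ℕ) : ℤ) = 2 ^ (2^k) := by push_cast; ring
    refine ⟨k, hk, ?_, ?_⟩
    · have : ((2^(2^k) : ℕ) : ℤ) ≤ (j:ℤ) + k := by rw [hc]; linarith
      exact_mod_cast this
    · have : (j:ℤ) ≤ ((2^(2^k) : ℕ) : ℤ) + k := by rw [hc]; linarith
      exact_mod_cast this
  · rintro ⟨k, hk, h1, h2⟩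
    have hc : ((2^(2^k) : ℕ) : ℤ) = 2 ^ (2^k) := by push_cast; ring
    refine ⟨k, hk, (j:ℤ) - 2^(2^k), ?_, ?_, by ring⟩
    · have h1' : ((2^(2^k) : ℕ) : ℤ) ≤ (j:ℤ) + k := by exact_mod_cast h1
      rw [hc] at h1'; linarith
    · have h2' : (j:ℤ) ≤ ((2^(2^k) : ℕ) : ℤ) + k := by exact_mod_cast h2
      rw [hc] at h2'; linarith

lemma inBlock_iff (j : ℕ) : inBlock j ↔ ∃ k, blkN j k := by
  constructor
  · rintro ⟨k, hk, h1, h2⟩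
    have hc : ((2^(2^k) : ℕ) : ℤ) = 2 ^ (2^k) := by push_cast; ring
    refine ⟨k, hk, ?_, ?_⟩
    · have : ((2^(2^k) : ℕ) : ℤ) ≤ (j:ℤ) + k := by rw [hc]; linarith
      exact_mod_cast this
    · have : (j:ℤ) ≤ ((2^(2^k) : ℕ) : ℤ) + 2*k := by rw [hc]; push_cast; linarith
      exact_mod_cast this
  · rintro ⟨k, hk, h1, h2⟩
    have hc : ((2^(2^k) : ℕ) : ℤ) = 2 ^ (2^k) := by push_cast; ring
    have h1' : ((2^(2^k) : ℕ) : ℤ) ≤ (j:ℤ) + k := by exact_mod_cast h1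
    have h2' : (j:ℤ) ≤ ((2^(2^k) : ℕ) : ℤ) + 2*k := by exact_mod_cast h2
    rw [hc] at h1' h2'
    exact ⟨k, hk, by linarith, by push_cast at h2' ⊢; linarith⟩

lemma sp_blk {j k : ℕ} (h : spN j k) : blkN j k := ⟨h.1, h.2.1, by have := h.2.2; omega⟩

lemma tl_blk {j k : ℕ} (h : tlN j k) : blkN j k := ⟨h.1, by have := h.2.1; omega, h.2.2⟩

lemma sep {k k' : ℕ} (hk : 1 ≤ k) (h : k < k') : 2^(2^k) + 2*k + k' < 2^(2^(k')) := by
  obtain ⟨m, rfl⟩ : ∃ m, k' = m + 1 := ⟨k' - 1, by omega⟩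
  have hm : 1 ≤ m := by omega
  have hA : 2^(2^k) ≤ 2^(2^m) :=
    Nat.pow_le_pow_right (by norm_num) (Nat.pow_le_pow_right (by norm_num) (by omega))
  have hm2 : m + 1 ≤ 2^m := Nat.lt_two_pow_self (n := m)
  have hB : 2*k ≤ 2^(2^m) := by
    have h1 : 2*k ≤ 2^(m+1) := by
      have : k ≤ m := by omega
      calc 2*k ≤ 2*(m+1) := by omega
      _ ≤ 2*2^m := by omega
      _ = 2^(m+1) := by ring
    exact le_trans h1 (Nat.pow_le_pow_right (by norm_num) hm2)
  have hC : m + 1 ≤ 2^(2^m) := le_trans hm2 (Nat.pow_le_pow_right (by norm_num) (Nat.le_of_lt (Nat.lt_two_pow_self (n := m))))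
  have hN : 4 ≤ 2^(2^m) := by
    calc (4:ℕ) = 2^2 := by norm_num
    _ ≤ 2^(2^m) := Nat.pow_le_pow_right (by norm_num) (by
        calc 2 = 2^1 := by norm_num
        _ ≤ 2^m := Nat.pow_le_pow_right (by norm_num) hm)
  have hsq : 2^(2^(m+1)) = 2^(2^m) * 2^(2^m) := by
    rw [← pow_add]
    congr 1
    ring
  have : 3 * 2^(2^m) < 2^(2^m) * 2^(2^m) := by nlinarith
  calc 2^(2^k) + 2*k + (m+1) ≤ 3 * 2^(2^m) := by omega
  _ < 2^(2^m) * 2^(2^m) := this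
  _ = 2^(2^(m+1)) := hsq.symm

lemma blk_unique {j k k' : ℕ} (h : blkN j k) (h' : blkN j k') : k = k' := by
  rcases lt_trichotomy k k' with h1 | h1 | h1
  · exfalso
    have hs := sep h.1 h1
    have h2 := h.2.2
    have h3 := h'.2.1
    omega
  · exact h1
  · exfalso
    have hs := sep h'.1 h1
    have h2 := h'.2.2
    have h3 := h.2.1
    omega

lemma sparse_ge3 {j : ℤ} (h : sparse j) : 3 ≤ j := by
  obtain ⟨k, hk, i, h1, h2, rfl⟩ := h
  have := aux1 k hk
  have hc : ((2^(2^k) : ℕ) : ℤ) = 2 ^ (2^k) := by push_cast; ring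
  have h3 : (2:ℤ)*k + 2 ≤ 2^(2^k) := by
    have : ((2*k+2 : ℕ) : ℤ) ≤ ((2^(2^k) : ℕ) : ℤ) := by exact_mod_cast this
    rw [hc] at this; push_cast at this; linarith
  linarith

lemma bSeq_succ (j : ℕ) : bSeq (j+1) = bSeq j / 2 + aSeq ((j:ℤ)+1) / 2 := by
  unfold bSeq
  rw [Finset.sum_Icc_succ_top (by omega)]
  have two_ne : (2:ℝ) ≠ 0 := two_ne_zero
  have key : (2:ℝ)^(-((j:ℕ)+1:ℤ)-1) = (2:ℝ)^(-(j:ℤ)-1) * 2⁻¹ := by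
    rw [← zpow_neg_one (2:ℝ), ← zpow_add₀ two_ne]
    congr 1
    push_cast
    ring
  have key2 : (2:ℝ)^(-((j:ℕ)+1:ℤ)-1) * (2:ℝ)^((j+1:ℕ)) = 2⁻¹ := by
    rw [← zpow_natCast (2:ℝ) (j+1), ← zpow_add₀ two_ne]
    rw [show (-((j:ℕ)+1:ℤ)-1) + ((j+1:ℕ):ℤ) = -1 by push_cast; ring]
    exact zpow_neg_one 2
  have hcast : ((j:ℤ)+1) = (((j+1:ℕ)):ℤ) := by push_cast; ring
  rw [hcast]
  push_cast
  rw [mul_add]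
  rw [key] at key2 ⊢
  linear_combination (aSeq ((j:ℤ)+1)) * key2

lemma aSeq_not (j : ℤ) (h : ¬ sparse j) : aSeq j = 1 := if_neg h

lemma aSeq_sp (j : ℤ) (h : sparse j) : aSeq j = Real.logb 2 (j:ℝ) := if_pos h

lemma logb_nat_mono {m n : ℕ} (hm : 1 ≤ m) (h : m ≤ n) :
    Real.logb 2 (m:ℝ) ≤ Real.logb 2 (n:ℝ) :=
  Real.logb_le_logb_of_le one_lt_two (by exact_mod_cast Nat.lt_of_lt_of_le Nat.zero_lt_one hm)
    (by exact_mod_cast h)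

lemma logb_pow2 (n : ℕ) : Real.logb 2 ((2:ℝ)^n) = n := by
  rw [Real.logb_pow, Real.logb_self_eq_one one_lt_two, mul_one]

lemma logb_ge {j n : ℕ} (h : 2^n ≤ j) : (n:ℝ) ≤ Real.logb 2 (j:ℝ) := by
  have h0 := logb_nat_mono (m := 2^n) (n := j) (Nat.one_le_two_pow) h
  rwa [show ((2^n : ℕ):ℝ) = (2:ℝ)^n by push_cast; ring, logb_pow2] at h0

lemma logb_le' {j n : ℕ} (hj : 1 ≤ j) (h : j ≤ 2^n) : Real.logb 2 (j:ℝ) ≤ (n:ℝ) := by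
  have h0 := logb_nat_mono (m := j) (n := 2^n) hj h
  rwa [show ((2^n : ℕ):ℝ) = (2:ℝ)^n by push_cast; ring, logb_pow2] at h0

lemma not_sparse_small {j : ℤ} (h : j < 3) : ¬ sparse j := fun hs => absurd (sparse_ge3 hs) (by omega)

lemma b0 : bSeq 0 = 0 := by unfold bSeq; simp

lemma b1 : bSeq 1 = 1/2 := by
  have h := bSeq_succ 0
  rw [b0, aSeq_not _ (not_sparse_small (by norm_num))] at h
  rw [h]; norm_num

lemma b2 : bSeq 2 = 3/4 := by
  have h := bSeq_succ 1
  rw [b1, aSeq_not _ (not_sparse_small (by norm_num))] at h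
  rw [h]; norm_num

/-- The strengthened invariant. -/
def Inv (j : ℕ) : Prop :=
  (∀ k, spN j k → bSeq j ≤ Real.logb 2 (j:ℝ)) ∧
  (∀ k, tlN j k → bSeq j ≤ (2:ℝ)^((2^(2^k) + 2*k) - j) + 1) ∧
  (¬ inBlock j → bSeq j ≤ 2)

lemma inv_zero : Inv 0 := by
  refine ⟨?_, ?_, ?_⟩
  · rintro k ⟨hk, h1, h2⟩
    exfalso
    have haux := aux1 k hk
    generalize hA : 2^(2^k) = A at h1 haux
    omega
  · rintro k ⟨hk, h1, h2⟩
    exfalso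
    generalize hA : 2^(2^k) = A at h1
    omega
  · intro _
    rw [b0]; norm_num

lemma inv_succ (j : ℕ) (IH : Inv j) : Inv (j+1) := by
  obtain ⟨IH1, IH2, IH3⟩ := IH
  have hrec := bSeq_succ j
  refine ⟨?_, ?_, ?_⟩
  · -- sparse part
    rintro k ⟨hk, h1, h2⟩
    have hsp : sparse (((j+1:ℕ)):ℤ) := (sparse_iff (j+1)).2 ⟨k, hk, h1, h2⟩
    have ha : aSeq ((j:ℤ)+1) = Real.logb 2 ((j:ℝ)+1) := by
      rw [show ((j:ℤ)+1) = (((j+1:ℕ)):ℤ) by push_cast; ring, aSeq_sp _ hsp]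
      push_cast; ring_nf
    have haux := aux1 k hk
    rcases eq_or_lt_of_le h1 with hstart | hint
    · -- start of block
      have hbj : bSeq j ≤ 2 := by
        by_cases hib : inBlock j
        · obtain ⟨k0, hblk⟩ := (inBlock_iff j).1 hib
          obtain ⟨hk0, hb1, hb2⟩ := hblk
          rcases lt_trichotomy k0 k with hlt | heq | hgt
          · have hs := sep hk0 hlt
            have haux0 := aux1 k0 hk0
            have hje : j = 2^(2^k0) + 2*k0 := by
              generalize hA : 2^(2^k0) = A at hs hb2 ⊢
              generalize hB : 2^(2^k) = B at hs hstart
              omega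
            have htl : tlN j k0 := by
              refine ⟨hk0, ?_, ?_⟩ <;>
                (generalize hA : 2^(2^k0) = A at hje ⊢; omega)
            have hIH := IH2 k0 htl
            have hE : (2^(2^k0) + 2*k0) - j = 0 := by
              generalize hA : 2^(2^k0) = A at hje ⊢; omega
            rw [hE, pow_zero] at hIH
            linarith
          · exfalso
            subst heq
            generalize hA : 2^(2^k0) = A at hb1 hstart
            omega
          · exfalso
            have hs := sep hk hgt
            generalize hA : 2^(2^k0) = A at hb1 hs
            generalize hB : 2^(2^k) = B at hstart hs
            omega
        · exact IH3 hib
      rcases Nat.lt_or_ge k 2 with hk1 | hk2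
      · -- k = 1 : j = 2
        have hk1' : k = 1 := by omega
        subst hk1'
        have hj2 : j = 2 := by norm_num at hstart; omega
        subst hj2
        have hL : (1:ℝ) ≤ Real.logb 2 3 := by
          have h3 := logb_ge (j := 3) (n := 1) (by norm_num)
          push_cast at h3
          linarith
        have h23 : ((2:ℕ):ℝ) + 1 = 3 := by norm_num
        rw [hrec, ha, b2, h23]
        push_cast
        norm_num
        linarith
      · -- k ≥ 2
        have h4 : 2^2 ≤ j+1 := by
          generalize hA : 2^(2^k) = A at hstart haux
          omega
        have hL : (2:ℝ) ≤ Real.logb 2 ((j:ℝ)+1) := by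
          have h0 := logb_ge (j := j+1) (n := 2) h4
          push_cast at h0
          linarith
        rw [hrec, ha]
        push_cast
        linarith
    · -- interior of sparse part
      have hspj : spN j k := by
        refine ⟨hk, ?_, ?_⟩ <;> (generalize hA : 2^(2^k) = A at hint h2 ⊢; omega)
      have hbj := IH1 k hspj
      have hj1 : 1 ≤ j := by
        generalize hA : 2^(2^k) = A at hint haux
        omega
      have hmono : Real.logb 2 (j:ℝ) ≤ Real.logb 2 ((j:ℝ)+1) := by
        have h0 := logb_nat_mono hj1 (Nat.le_succ j)
        push_cast at h0
        linarith
      rw [hrec, ha]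
      push_cast
      linarith
  · -- tail part
    rintro k ⟨hk, h1, h2⟩
    have haux := aux1 k hk
    have hblk1 : blkN (j+1) k := tl_blk ⟨hk, h1, h2⟩
    have hns : ¬ sparse ((j:ℤ)+1) := by
      rw [show ((j:ℤ)+1) = (((j+1:ℕ)):ℤ) by push_cast; ring]
      intro hs
      obtain ⟨k'', hsp⟩ := (sparse_iff (j+1)).1 hs
      have hkk := blk_unique (sp_blk hsp) hblk1
      subst hkk
      have := hsp.2.2
      generalize hA : 2^(2^k'') = A at h1 this
      omega
    have ha : aSeq ((j:ℤ)+1) = 1 := aSeq_not _ hns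
    by_cases hfirst : j = 2^(2^k) + k
    · have hspj : spN j k := by
        refine ⟨hk, ?_, ?_⟩ <;> (generalize hA : 2^(2^k) = A at hfirst ⊢; omega)
      have hbj := IH1 k hspj
      have hub : Real.logb 2 (j:ℝ) ≤ (2:ℝ)^k + 1 := by
        have h2k : j ≤ 2^(2^k+1) := by
          rw [pow_succ]
          generalize hA : 2^(2^k) = A at hfirst haux ⊢
          omega
        have hj1 : 1 ≤ j := by
          generalize hA : 2^(2^k) = A at hfirst haux
          omega
        have h0 := logb_le' hj1 h2k
        push_cast at h0
        linarith
      have hE : (2^(2^k) + 2*k) - (j+1) = k - 1 := by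
        generalize hA : 2^(2^k) = A at hfirst ⊢
        omega
      have hpow : (2:ℝ)^(k-1) * 2 = (2:ℝ)^k := by
        rw [← pow_succ]
        congr 1
        omega
      rw [hrec, ha, hE]
      linarith
    · have htlj : tlN j k := by
        refine ⟨hk, ?_, ?_⟩ <;> (generalize hA : 2^(2^k) = A at h1 h2 hfirst ⊢; omega)
      have hbj := IH2 k htlj
      have hE : (2^(2^k) + 2*k) - j = ((2^(2^k) + 2*k) - (j+1)) + 1 := by
        generalize hA : 2^(2^k) = A at h2 ⊢
        omega
      rw [hE, pow_succ] at hbj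
      rw [hrec, ha]
      linarith
  · -- off block
    intro hnb
    have hns : ¬ sparse ((j:ℤ)+1) := by
      rw [show ((j:ℤ)+1) = (((j+1:ℕ)):ℤ) by push_cast; ring]
      intro hs
      obtain ⟨k'', hsp⟩ := (sparse_iff (j+1)).1 hs
      exact hnb ((inBlock_iff _).2 ⟨k'', sp_blk hsp⟩)
    have ha : aSeq ((j:ℤ)+1) = 1 := aSeq_not _ hns
    have hbj : bSeq j ≤ 2 := by
      by_cases hib : inBlock j
      · obtain ⟨k0, hblk⟩ := (inBlock_iff j).1 hib
        obtain ⟨hk0, hb1, hb2⟩ := hblk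
        have hjend : j = 2^(2^k0) + 2*k0 := by
          by_contra hne
          refine hnb ((inBlock_iff _).2 ⟨k0, hk0, ?_, ?_⟩) <;>
            (generalize hA : 2^(2^k0) = A at hb1 hb2 hne ⊢; omega)
        have htl : tlN j k0 := by
          refine ⟨hk0, ?_, ?_⟩ <;> (generalize hA : 2^(2^k0) = A at hjend ⊢; omega)
        have hIH := IH2 k0 htl
        have hE : (2^(2^k0) + 2*k0) - j = 0 := by
          generalize hA : 2^(2^k0) = A at hjend ⊢
          omega
        rw [hE, pow_zero] at hIH
        linarith
      · exact IH3 hib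
    rw [hrec, ha]
    linarith

lemma inv_all (j : ℕ) : Inv j := by
  induction j with
  | zero => exact inv_zero
  | succ n ih => exact inv_succ n ih

end Stmt4Aux

open Stmt4Aux in
theorem stmt4 (j : ℕ) (hj : 1 ≤ j) :
    (inBlock j → bSeq j ≤ Real.logb 2 (j:ℝ)) ∧ (¬ inBlock j → bSeq j ≤ 2) := by
  obtain ⟨H1, H2, H3⟩ := inv_all j
  refine ⟨?_, H3⟩
  intro hib
  obtain ⟨k, hk, hb1, hb2⟩ := (inBlock_iff j).1 hib
  by_cases hsp : j ≤ 2^(2^k) + k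
  · exact H1 k ⟨hk, hb1, hsp⟩
  · have htl : tlN j k := ⟨hk, by omega, hb2⟩
    have hbd := H2 k htl
    have hEk : (2^(2^k) + 2*k) - j ≤ k - 1 := by
      generalize hA : 2^(2^k) = A at hsp ⊢
      omega
    have hp1 : (2:ℝ)^((2^(2^k) + 2*k) - j) ≤ (2:ℝ)^(k-1) :=
      pow_le_pow_right₀ (by norm_num) hEk
    have hp2 : (1:ℝ) ≤ (2:ℝ)^(k-1) := one_le_pow₀ (by norm_num)
    have hp3 : (2:ℝ)^(k-1) + (2:ℝ)^(k-1) = (2:ℝ)^k := by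
      rw [← two_mul, ← pow_succ']
      congr 1
      omega
    have hlog : ((2^k : ℕ):ℝ) ≤ Real.logb 2 (j:ℝ) := logb_ge (by omega)
    push_cast at hlog
    linarith
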